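/- arXiv:1502.03369 — 3 statements merged into one kernel-verified Lean document; each statement's English description precedes it below -/
import Mathlib

section
/- For all measurable functions x, y : [0,∞) → [0,∞) satisfying ∫∫ x(u)x(v)|v−u|^{2H−2} du dv < ∞ and ∫∫ y(u)y(v)|v−u|^{2H−2} du dv < ∞ (with H ∈ (1/2,1)), and for any a ∈ ℝ, one has (∫_{[0,∞)²} x(u) y(v) |v−u−a|^{2H−2} du dv)² ≤ (∫_{[0,∞)²} x(u)x(v)|v−u|^{2H−2} du dv) · (∫_{[0,∞)²} y(u)y(v)|v−u|^{2H−2} du dv). -/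
open MeasureTheory Set
open scoped ENNReal

noncomputable def gk (β t : ℝ) : ℝ≥0∞ := ENNReal.ofReal (if 0 < t then t ^ β else 0)

@[measurability, fun_prop]
lemma measurable_gk (β : ℝ) : Measurable (gk β) := by
  unfold gk
  apply ENNReal.measurable_ofReal.comp
  exact Measurable.ite measurableSet_Ioi (by fun_prop) measurable_const

lemma gk_of_nonpos {β t : ℝ} (ht : t ≤ 0) : gk β t = 0 := by
  simp [gk, not_lt.2 ht]

lemma gk_of_pos {β t : ℝ} (ht : 0 < t) : gk β t = ENNReal.ofReal (t ^ β) := by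
  simp [gk, ht]

noncomputable def Ck (β : ℝ) : ℝ≥0∞ := ∫⁻ r in Ioi (0:ℝ), ENNReal.ofReal (r ^ β * (1+r) ^ β)

lemma lint_ofReal_lt_top {f : ℝ → ℝ} {s : Set ℝ} (hf : IntegrableOn f s) :
    ∫⁻ r in s, ENNReal.ofReal (f r) < ⊤ := by
  refine lt_of_le_of_lt (lintegral_mono fun r => ?_) hf.hasFiniteIntegral
  rw [Real.enorm_eq_ofReal_abs]
  exact ENNReal.ofReal_le_ofReal (le_abs_self _)

lemma Ck_lt_top {β : ℝ} (hβ1 : -1 < β) (hβ2 : β < -1/2) : Ck β < ⊤ := by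
  have hβ0 : β ≤ 0 := by linarith
  have hsplit : (Ioi (0:ℝ)) = Ioc (0:ℝ) 1 ∪ Ioi 1 := (Ioc_union_Ioi_eq_Ioi zero_le_one).symm
  rw [Ck, hsplit, lintegral_union measurableSet_Ioi Ioc_disjoint_Ioi_same]
  apply ENNReal.add_lt_top.2
  constructor
  · -- on Ioc 0 1, bound by r ^ β
    have hle : ∫⁻ r in Ioc (0:ℝ) 1, ENNReal.ofReal (r ^ β * (1+r) ^ β)
        ≤ ∫⁻ r in Ioc (0:ℝ) 1, ENNReal.ofReal (r ^ β) := by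
      refine setLIntegral_mono' measurableSet_Ioc fun r hr => ?_
      apply ENNReal.ofReal_le_ofReal
      have h1 : (1+r) ^ β ≤ 1 := Real.rpow_le_one_of_one_le_of_nonpos (by linarith [hr.1]) hβ0
      have h2 : 0 ≤ r ^ β := Real.rpow_nonneg hr.1.le _
      nlinarith [Real.rpow_nonneg (show (0:ℝ) ≤ 1 + r by linarith [hr.1]) β]
    refine lt_of_le_of_lt hle (lint_ofReal_lt_top ?_)
    have := intervalIntegral.intervalIntegrable_rpow' (a := 0) (b := 1) hβ1
    rwa [intervalIntegrable_iff_integrableOn_Ioc_of_le zero_le_one] at this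
  · -- on Ioi 1, bound by r ^ (2β)
    have hle : ∫⁻ r in Ioi (1:ℝ), ENNReal.ofReal (r ^ β * (1+r) ^ β)
        ≤ ∫⁻ r in Ioi (1:ℝ), ENNReal.ofReal (r ^ (2*β)) := by
      refine setLIntegral_mono' measurableSet_Ioi fun r hr => ?_
      apply ENNReal.ofReal_le_ofReal
      have hr0 : (0:ℝ) < r := lt_trans one_pos hr
      have h1 : (1+r) ^ β ≤ r ^ β := Real.rpow_le_rpow_of_nonpos hr0 (by linarith) hβ0
      have h2 : r ^ β * r ^ β = r ^ (2*β) := by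
        rw [← Real.rpow_add hr0]; ring_nf
      have h3 : 0 ≤ r ^ β := Real.rpow_nonneg hr0.le _
      nlinarith
    refine lt_of_le_of_lt hle (lint_ofReal_lt_top ?_)
    exact integrableOn_Ioi_rpow_of_lt (by linarith) one_pos
lemma Ck_pos {β : ℝ} (hβ0 : β ≤ 0) : 0 < Ck β := by
  have hsub : Ioc (1:ℝ) 2 ⊆ Ioi 0 := fun r hr => lt_trans one_pos hr.1
  have hge : ∫⁻ r in Ioc (1:ℝ) 2, ENNReal.ofReal ((2:ℝ) ^ β * (3:ℝ) ^ β) ≤ Ck β := by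
    refine le_trans ?_ (lintegral_mono_set hsub)
    refine setLIntegral_mono' measurableSet_Ioc fun r hr => ?_
    apply ENNReal.ofReal_le_ofReal
    have hr0 : (0:ℝ) < r := lt_trans one_pos hr.1
    have h1 : (2:ℝ) ^ β ≤ r ^ β := Real.rpow_le_rpow_of_nonpos hr0 hr.2 hβ0
    have h2 : (3:ℝ) ^ β ≤ (1+r) ^ β :=
      Real.rpow_le_rpow_of_nonpos (by linarith [hr.1]) (by linarith [hr.2]) hβ0
    have := Real.rpow_nonneg (show (0:ℝ) ≤ 2 by norm_num) β
    have := Real.rpow_nonneg (show (0:ℝ) ≤ 3 by norm_num) β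
    nlinarith
  refine lt_of_lt_of_le ?_ hge
  rw [setLIntegral_const]
  apply ENNReal.mul_pos
  · simp only [ne_eq, ENNReal.ofReal_eq_zero, not_le]
    positivity
  · simp [Real.volume_Ioc]

-- substitution lemmas
lemma lint_neg (f : ℝ → ℝ≥0∞) (hf : Measurable f) : ∫⁻ s, f (-s) = ∫⁻ s, f s := by
  rw [← lintegral_map' hf.aemeasurable (measurable_neg.aemeasurable), Measure.map_neg_eq_self]

lemma lint_sub (f : ℝ → ℝ≥0∞) (hf : Measurable f) (c : ℝ) : ∫⁻ s, f (c - s) = ∫⁻ s, f s := by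
  calc ∫⁻ s, f (c - s) = ∫⁻ s, f (-s + c) := by congr 1; ext s; ring_nf
    _ = ∫⁻ s, f (s + c) := lint_neg (fun s => f (s + c)) (by fun_prop)
    _ = ∫⁻ s, f s := lintegral_add_right_eq_self f c

lemma lint_mul (f : ℝ → ℝ≥0∞) (hf : Measurable f) {c : ℝ} (hc : 0 < c) :
    ENNReal.ofReal c * ∫⁻ t, f (c * t) = ∫⁻ t, f t := by
  rw [← lintegral_map' hf.aemeasurable (measurable_const_mul c).aemeasurable,
    Real.map_volume_mul_left hc.ne', lintegral_smul_measure]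
  rw [abs_of_pos (inv_pos.2 hc), smul_eq_mul, ← mul_assoc, ← ENNReal.ofReal_mul hc.le]
  simp [mul_inv_cancel₀ hc.ne']

-- kernel at positive shift
lemma kernel_shift {β : ℝ} (hβ1 : -1 < β) (hβ2 : β < -1/2) {c : ℝ} (hc : 0 < c) :
    ∫⁻ t, gk β t * gk β (c + t) = ENNReal.ofReal (c ^ (2*β+1)) * Ck β := by
  have key : ∀ r : ℝ, gk β (c * r) * gk β (c + c * r)
      = ENNReal.ofReal (c ^ (2*β)) * (Ioi (0:ℝ)).indicator
          (fun r => ENNReal.ofReal (r ^ β * (1+r) ^ β)) r := by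
    intro r
    by_cases hr : 0 < r
    · have h1 : 0 < c * r := mul_pos hc hr
      have h2 : 0 < c + c * r := by linarith
      rw [gk_of_pos h1, gk_of_pos h2, indicator_of_mem (mem_Ioi.2 hr)]
      rw [← ENNReal.ofReal_mul (Real.rpow_nonneg h1.le _),
        ← ENNReal.ofReal_mul (Real.rpow_nonneg hc.le _)]
      congr 1
      rw [show c + c * r = c * (1 + r) by ring, Real.mul_rpow hc.le hr.le,
        Real.mul_rpow hc.le (by linarith : (0:ℝ) ≤ 1 + r),
        show (2:ℝ)*β = β + β by ring, Real.rpow_add hc]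
      ring
    · rw [gk_of_nonpos (by nlinarith [not_lt.1 hr] : c * r ≤ 0),
        indicator_of_notMem (by simpa using hr), zero_mul, mul_zero]
  have hmeas : Measurable fun t => gk β t * gk β (c + t) := by fun_prop
  calc ∫⁻ t, gk β t * gk β (c + t)
      = ENNReal.ofReal c * ∫⁻ r, gk β (c * r) * gk β (c + c * r) := (lint_mul _ hmeas hc).symm
    _ = ENNReal.ofReal c * (ENNReal.ofReal (c ^ (2*β)) * Ck β) := by
        rw [lintegral_congr fun r => key r, lintegral_const_mul _ (by
          exact (ENNReal.measurable_ofReal.comp (by fun_prop)).indicator measurableSet_Ioi),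
          lintegral_indicator measurableSet_Ioi]
        rfl
    _ = ENNReal.ofReal (c ^ (2*β+1)) * Ck β := by
        rw [← mul_assoc, ← ENNReal.ofReal_mul hc.le]
        congr 2
        rw [Real.rpow_add hc, Real.rpow_one]; ring

-- general kernel representation
lemma kernel_repr {β : ℝ} (hβ1 : -1 < β) (hβ2 : β < -1/2) {u w : ℝ} (huw : u ≠ w) :
    ∫⁻ s, gk β (u - s) * gk β (w - s) = ENNReal.ofReal (|w - u| ^ (2*β+1)) * Ck β := by
  wlog h : u < w generalizing u w
  · have h' : w < u := lt_of_le_of_ne (not_lt.1 h) (Ne.symm huw)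
    rw [show |w - u| = |u - w| by rw [abs_sub_comm], ← this h'.ne h']
    exact lintegral_congr fun s => mul_comm _ _
  have hc : 0 < w - u := sub_pos.2 h
  have hmeas : Measurable fun t => gk β t * gk β ((w - u) + t) := by fun_prop
  calc ∫⁻ s, gk β (u - s) * gk β (w - s)
      = ∫⁻ s, (fun t => gk β t * gk β ((w - u) + t)) (u - s) := by
        apply lintegral_congr; intro s; simp only []; congr 2; ring
    _ = ∫⁻ t, gk β t * gk β ((w - u) + t) := lint_sub _ hmeas u
    _ = ENNReal.ofReal ((w - u) ^ (2*β+1)) * Ck β := kernel_shift hβ1 hβ2 hc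
    _ = ENNReal.ofReal (|w - u| ^ (2*β+1)) * Ck β := by rw [abs_of_pos hc]

noncomputable def Phi (β : ℝ) (f : ℝ → ℝ) (s : ℝ) : ℝ≥0∞ :=
  ∫⁻ u, ENNReal.ofReal (f u) * gk β (u - s)

lemma measurable_Phi (β : ℝ) {f : ℝ → ℝ} (hf : Measurable f) : Measurable (Phi β f) := by
  unfold Phi
  exact Measurable.lintegral_prod_right'
    (f := fun q : ℝ × ℝ => ENNReal.ofReal (f q.2) * gk β (q.2 - q.1)) (by fun_prop)

lemma bridge {β : ℝ} (hβ1 : -1 < β) (hβ2 : β < -1/2) {f g : ℝ → ℝ}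
    (hf : Measurable f) (hg : Measurable g) (a : ℝ) :
    ∫⁻ s, Phi β f s * Phi β g (s + a)
      = Ck β * ∫⁻ p : ℝ × ℝ, ENNReal.ofReal (f p.1) * ENNReal.ofReal (g p.2)
          * ENNReal.ofReal (|p.2 - p.1 - a| ^ (2*β+1)) := by
  set F : ℝ → ℝ≥0∞ := fun u => ENNReal.ofReal (f u) with hF
  set G : ℝ → ℝ≥0∞ := fun v => ENNReal.ofReal (g v) with hG
  have hFm : Measurable F := by fun_prop
  have hGm : Measurable G := by fun_prop
  have hPg : Measurable (Phi β g) := measurable_Phi β hg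
  -- inner step: for fixed u
  have inner : ∀ u : ℝ, ∫⁻ s, gk β (u - s) * Phi β g (s + a)
      = ∫⁻ v, G v * (ENNReal.ofReal (|v - u - a| ^ (2*β+1)) * Ck β) := by
    intro u
    have h1 : ∀ s : ℝ, gk β (u - s) * Phi β g (s + a)
        = ∫⁻ v, gk β (u - s) * (G v * gk β (v - a - s)) := by
      intro s
      rw [Phi, ← lintegral_const_mul'' _ (by fun_prop)]
      apply lintegral_congr; intro v
      have : v - (s + a) = v - a - s := by ring
      rw [this]
    rw [lintegral_congr h1, lintegral_lintegral_swap (by fun_prop)]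
    apply lintegral_congr_ae
    have hae : ∀ᵐ (v : ℝ), v ≠ u + a := by
      rw [ae_iff]
      have : {v : ℝ | ¬ v ≠ u + a} = {u + a} := by ext v; simp
      rw [this]; exact measure_singleton _
    filter_upwards [hae] with v hv
    have h2 : ∀ s : ℝ, gk β (u - s) * (G v * gk β (v - a - s))
        = G v * (gk β (u - s) * gk β ((v - a) - s)) := by
      intro s; ring_nf
    rw [lintegral_congr h2, lintegral_const_mul'' _ (by fun_prop),
      kernel_repr hβ1 hβ2 (show u ≠ v - a by intro h; exact hv (by linarith)),
      show v - a - u = v - u - a by ring]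
  calc ∫⁻ s, Phi β f s * Phi β g (s + a)
      = ∫⁻ s, ∫⁻ u, F u * gk β (u - s) * Phi β g (s + a) := by
        apply lintegral_congr; intro s
        rw [Phi, ← lintegral_mul_const'' _ (by fun_prop)]
    _ = ∫⁻ u, ∫⁻ s, F u * gk β (u - s) * Phi β g (s + a) :=
        lintegral_lintegral_swap (by fun_prop)
    _ = ∫⁻ u, F u * ∫⁻ v, G v * (ENNReal.ofReal (|v - u - a| ^ (2*β+1)) * Ck β) := by
        apply lintegral_congr; intro u
        rw [← inner u, ← lintegral_const_mul'' _ (by fun_prop)]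
        apply lintegral_congr; intro s; ring
    _ = Ck β * ∫⁻ p : ℝ × ℝ, F p.1 * G p.2 * ENNReal.ofReal (|p.2 - p.1 - a| ^ (2*β+1)) := by
        have hm : Measurable fun u : ℝ => ∫⁻ v : ℝ,
            F u * G v * ENNReal.ofReal (|v - u - a| ^ (2*β+1)) :=
          Measurable.lintegral_prod_right'
            (f := fun p : ℝ × ℝ => F p.1 * G p.2 * ENNReal.ofReal (|p.2 - p.1 - a| ^ (2*β+1)))
            (by fun_prop)
        rw [Measure.volume_eq_prod, lintegral_prod _ (by fun_prop),
          ← lintegral_const_mul'' _ hm.aemeasurable]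
        apply lintegral_congr; intro u
        rw [← lintegral_const_mul'' _ (by fun_prop), ← lintegral_const_mul'' _ (by fun_prop)]
        apply lintegral_congr; intro v; ring

lemma ennreal_rpow_two (z : ℝ≥0∞) : z ^ (2:ℝ) = z * z := by
  rw [show (2:ℝ) = ((2:ℕ):ℝ) by norm_num, ENNReal.rpow_natCast, pow_two]

/-- Cauchy–Schwarz-type inequality for the fractional kernel `|t|^(2H-2)`. -/
theorem stmt_0 (H : ℝ) (hH : H ∈ Set.Ioo (1/2 : ℝ) 1)
    (x y : ℝ → ℝ) (hx : Measurable x) (hy : Measurable y)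
    (hxpos : ∀ u, 0 ≤ x u) (hypos : ∀ u, 0 ≤ y u)
    (hx0 : ∀ u < (0:ℝ), x u = 0) (hy0 : ∀ u < (0:ℝ), y u = 0)
    (hxint : IntegrableOn
      (fun p : ℝ × ℝ => x p.1 * x p.2 * |p.2 - p.1| ^ (2*H - 2))
      (Set.Ici (0:ℝ) ×ˢ Set.Ici (0:ℝ)))
    (hyint : IntegrableOn
      (fun p : ℝ × ℝ => y p.1 * y p.2 * |p.2 - p.1| ^ (2*H - 2))
      (Set.Ici (0:ℝ) ×ˢ Set.Ici (0:ℝ)))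
    (a : ℝ) :
    (∫ p in Set.Ici (0:ℝ) ×ˢ Set.Ici (0:ℝ),
        x p.1 * y p.2 * |p.2 - p.1 - a| ^ (2*H - 2)) ^ 2
      ≤ (∫ p in Set.Ici (0:ℝ) ×ˢ Set.Ici (0:ℝ),
          x p.1 * x p.2 * |p.2 - p.1| ^ (2*H - 2))
        * (∫ p in Set.Ici (0:ℝ) ×ˢ Set.Ici (0:ℝ),
          y p.1 * y p.2 * |p.2 - p.1| ^ (2*H - 2)) := by
  obtain ⟨hH1, hH2⟩ := hH
  set β : ℝ := H - 3/2 with hβdef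
  have hβ1 : -1 < β := by rw [hβdef]; linarith
  have hβ2 : β < -1/2 := by rw [hβdef]; linarith
  have h2β : 2*β+1 = 2*H - 2 := by rw [hβdef]; ring
  set S : Set (ℝ × ℝ) := Set.Ici (0:ℝ) ×ˢ Set.Ici (0:ℝ) with hSdef
  have hS : MeasurableSet S := measurableSet_Ici.prod measurableSet_Ici
  -- extension lemma: set-integral of the nonneg product = full-space lintegral
  have ext_eq : ∀ (f g : ℝ → ℝ), (∀ u, 0 ≤ f u) → (∀ u, 0 ≤ g u) →
      (∀ u < (0:ℝ), f u = 0) → (∀ u < (0:ℝ), g u = 0) → ∀ (K : ℝ × ℝ → ℝ),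
      ∫⁻ p in S, ENNReal.ofReal (f p.1 * g p.2 * K p)
        = ∫⁻ p : ℝ × ℝ, ENNReal.ofReal (f p.1) * ENNReal.ofReal (g p.2)
            * ENNReal.ofReal (K p) := by
    intro f g hfpos hgpos hf0 hg0 K
    rw [← lintegral_indicator hS]
    apply lintegral_congr; intro p
    by_cases hp : p ∈ S
    · rw [indicator_of_mem hp,
        ENNReal.ofReal_mul (mul_nonneg (hfpos _) (hgpos _)),
        ENNReal.ofReal_mul (hfpos _)]
    · rw [indicator_of_notMem hp]
      rw [hSdef, Set.mem_prod, not_and_or] at hp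
      rcases hp with hp | hp
      · rw [hf0 p.1 (by simpa using hp)]; simp
      · rw [hg0 p.2 (by simpa using hp)]; simp
  -- the three lintegrals
  set Ta : ℝ≥0∞ := ∫⁻ p : ℝ × ℝ, ENNReal.ofReal (x p.1) * ENNReal.ofReal (y p.2)
      * ENNReal.ofReal (|p.2 - p.1 - a| ^ (2*H - 2)) with hTa_def
  set Txx : ℝ≥0∞ := ∫⁻ p : ℝ × ℝ, ENNReal.ofReal (x p.1) * ENNReal.ofReal (x p.2)
      * ENNReal.ofReal (|p.2 - p.1| ^ (2*H - 2)) with hTxx_def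
  set Tyy : ℝ≥0∞ := ∫⁻ p : ℝ × ℝ, ENNReal.ofReal (y p.1) * ENNReal.ofReal (y p.2)
      * ENNReal.ofReal (|p.2 - p.1| ^ (2*H - 2)) with hTyy_def
  -- Bochner integrals equal toReal of the lintegrals (for xx, yy)
  have hxx_nn : (0:ℝ × ℝ → ℝ) ≤ᵐ[volume.restrict S]
      fun p => x p.1 * x p.2 * |p.2 - p.1| ^ (2*H - 2) :=
    Filter.Eventually.of_forall fun p =>
      mul_nonneg (mul_nonneg (hxpos _) (hxpos _)) (Real.rpow_nonneg (abs_nonneg _) _)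
  have hyy_nn : (0:ℝ × ℝ → ℝ) ≤ᵐ[volume.restrict S]
      fun p => y p.1 * y p.2 * |p.2 - p.1| ^ (2*H - 2) :=
    Filter.Eventually.of_forall fun p =>
      mul_nonneg (mul_nonneg (hypos _) (hypos _)) (Real.rpow_nonneg (abs_nonneg _) _)
  have hxx : ENNReal.ofReal (∫ p in S, x p.1 * x p.2 * |p.2 - p.1| ^ (2*H - 2)) = Txx := by
    rw [ofReal_integral_eq_lintegral_ofReal hxint hxx_nn,
      ext_eq x x hxpos hxpos hx0 hx0 fun p => |p.2 - p.1| ^ (2*H - 2)]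
  have hyy : ENNReal.ofReal (∫ p in S, y p.1 * y p.2 * |p.2 - p.1| ^ (2*H - 2)) = Tyy := by
    rw [ofReal_integral_eq_lintegral_ofReal hyint hyy_nn,
      ext_eq y y hypos hypos hy0 hy0 fun p => |p.2 - p.1| ^ (2*H - 2)]
  have hTxx_top : Txx ≠ ⊤ := by rw [← hxx]; exact ENNReal.ofReal_ne_top
  have hTyy_top : Tyy ≠ ⊤ := by rw [← hyy]; exact ENNReal.ofReal_ne_top
  -- bridge identities
  have hCk0 : Ck β ≠ 0 := (Ck_pos (by linarith)).ne'
  have hCkt : Ck β ≠ ⊤ := (Ck_lt_top hβ1 hβ2).ne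
  have hbr_a : ∫⁻ s, Phi β x s * Phi β y (s + a) = Ck β * Ta := by
    have := bridge hβ1 hβ2 hx hy a
    rw [hTa_def]; rw [this, h2β]
  have hbr_x : ∫⁻ s, (Phi β x s) ^ (2:ℝ) = Ck β * Txx := by
    have hb := bridge hβ1 hβ2 hx hx 0
    simp only [add_zero, sub_zero] at hb
    rw [show ∫⁻ s, (Phi β x s) ^ (2:ℝ) = ∫⁻ s, Phi β x s * Phi β x s from
      lintegral_congr fun s => ennreal_rpow_two _, hb, h2β, hTxx_def]
  have hbr_y : ∫⁻ s, (Phi β y s) ^ (2:ℝ) = Ck β * Tyy := by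
    have hb := bridge hβ1 hβ2 hy hy 0
    simp only [add_zero, sub_zero] at hb
    rw [show ∫⁻ s, (Phi β y s) ^ (2:ℝ) = ∫⁻ s, Phi β y s * Phi β y s from
      lintegral_congr fun s => ennreal_rpow_two _, hb, h2β, hTyy_def]
  -- Hölder (Cauchy–Schwarz)
  have hconj : Real.HolderConjugate 2 2 := by constructor <;> norm_num
  have hPx := measurable_Phi β hx
  have hPy := measurable_Phi β hy
  have holder : ∫⁻ s, Phi β x s * Phi β y (s + a)
      ≤ (∫⁻ s, (Phi β x s) ^ (2:ℝ)) ^ (1/2:ℝ) * (∫⁻ s, (Phi β y (s + a)) ^ (2:ℝ)) ^ (1/2:ℝ) := by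
    have := ENNReal.lintegral_mul_le_Lp_mul_Lq volume hconj hPx.aemeasurable
      ((hPy.comp (measurable_add_const a)).aemeasurable)
    simpa using this
  have htr : ∫⁻ s, (Phi β y (s + a)) ^ (2:ℝ) = ∫⁻ s, (Phi β y s) ^ (2:ℝ) :=
    lintegral_add_right_eq_self (fun s => (Phi β y s) ^ (2:ℝ)) a
  have hmain : Ck β * Ta ≤ Ck β * (Txx * Tyy) ^ (1/2:ℝ) := by
    calc Ck β * Ta = ∫⁻ s, Phi β x s * Phi β y (s + a) := hbr_a.symm
      _ ≤ (∫⁻ s, (Phi β x s) ^ (2:ℝ)) ^ (1/2:ℝ)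
          * (∫⁻ s, (Phi β y (s + a)) ^ (2:ℝ)) ^ (1/2:ℝ) := holder
      _ = (Ck β * Txx) ^ (1/2:ℝ) * (Ck β * Tyy) ^ (1/2:ℝ) := by rw [htr, hbr_x, hbr_y]
      _ = Ck β * (Txx * Tyy) ^ (1/2:ℝ) := by
          rw [ENNReal.mul_rpow_of_nonneg _ _ (by norm_num : (0:ℝ) ≤ 1/2),
            ENNReal.mul_rpow_of_nonneg _ _ (by norm_num : (0:ℝ) ≤ 1/2),
            ENNReal.mul_rpow_of_nonneg _ _ (by norm_num : (0:ℝ) ≤ 1/2)]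
          have hCkCk : Ck β ^ (1/2:ℝ) * Ck β ^ (1/2:ℝ) = Ck β := by
            rw [← ENNReal.rpow_add_of_nonneg _ _ (by norm_num) (by norm_num)]
            norm_num
          calc Ck β ^ (1/2:ℝ) * Txx ^ (1/2:ℝ) * (Ck β ^ (1/2:ℝ) * Tyy ^ (1/2:ℝ))
              = (Ck β ^ (1/2:ℝ) * Ck β ^ (1/2:ℝ)) * (Txx ^ (1/2:ℝ) * Tyy ^ (1/2:ℝ)) := by ring
            _ = Ck β * (Txx ^ (1/2:ℝ) * Tyy ^ (1/2:ℝ)) := by rw [hCkCk]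
  have hTa_le : Ta ≤ (Txx * Tyy) ^ (1/2:ℝ) := (ENNReal.mul_le_mul_iff_right hCk0 hCkt).1 hmain
  have hTa_top : Ta ≠ ⊤ := by
    refine ne_top_of_le_ne_top ?_ hTa_le
    exact ENNReal.rpow_ne_top_of_nonneg (by norm_num) (ENNReal.mul_ne_top hTxx_top hTyy_top)
  -- integrability of the mixed integrand
  have hmix_nn : (0:ℝ × ℝ → ℝ) ≤ᵐ[volume.restrict S]
      fun p => x p.1 * y p.2 * |p.2 - p.1 - a| ^ (2*H - 2) :=
    Filter.Eventually.of_forall fun p =>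
      mul_nonneg (mul_nonneg (hxpos _) (hypos _)) (Real.rpow_nonneg (abs_nonneg _) _)
  have hmix_lint : ∫⁻ p in S, ENNReal.ofReal (x p.1 * y p.2 * |p.2 - p.1 - a| ^ (2*H - 2)) = Ta := by
    rw [ext_eq x y hxpos hypos hx0 hy0 fun p => |p.2 - p.1 - a| ^ (2*H - 2)]
  have hmix_int : IntegrableOn
      (fun p : ℝ × ℝ => x p.1 * y p.2 * |p.2 - p.1 - a| ^ (2*H - 2)) S := by
    constructor
    · exact (Measurable.aestronglyMeasurable (by fun_prop))
    · rw [hasFiniteIntegral_iff_ofReal hmix_nn, hmix_lint]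
      exact hTa_top.lt_top
  have hmix : ENNReal.ofReal (∫ p in S, x p.1 * y p.2 * |p.2 - p.1 - a| ^ (2*H - 2)) = Ta := by
    rw [ofReal_integral_eq_lintegral_ofReal hmix_int hmix_nn, hmix_lint]
  -- finish
  have hint_mix_nn : 0 ≤ ∫ p in S, x p.1 * y p.2 * |p.2 - p.1 - a| ^ (2*H - 2) :=
    integral_nonneg_of_ae hmix_nn
  have hint_xx_nn : 0 ≤ ∫ p in S, x p.1 * x p.2 * |p.2 - p.1| ^ (2*H - 2) :=
    integral_nonneg_of_ae hxx_nn
  have hint_yy_nn : 0 ≤ ∫ p in S, y p.1 * y p.2 * |p.2 - p.1| ^ (2*H - 2) :=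
    integral_nonneg_of_ae hyy_nn
  have e1 : ∫ p in S, x p.1 * y p.2 * |p.2 - p.1 - a| ^ (2*H - 2) = Ta.toReal := by
    rw [← hmix, ENNReal.toReal_ofReal hint_mix_nn]
  have e2 : ∫ p in S, x p.1 * x p.2 * |p.2 - p.1| ^ (2*H - 2) = Txx.toReal := by
    rw [← hxx, ENNReal.toReal_ofReal hint_xx_nn]
  have e3 : ∫ p in S, y p.1 * y p.2 * |p.2 - p.1| ^ (2*H - 2) = Tyy.toReal := by
    rw [← hyy, ENNReal.toReal_ofReal hint_yy_nn]
  rw [e1, e2, e3]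
  have hTT : Ta * Ta ≤ Txx * Tyy := by
    calc Ta * Ta ≤ (Txx * Tyy) ^ (1/2:ℝ) * (Txx * Tyy) ^ (1/2:ℝ) := mul_le_mul' hTa_le hTa_le
      _ = Txx * Tyy := by
          rw [← ENNReal.rpow_add_of_nonneg _ _ (by norm_num) (by norm_num)]; norm_num
  calc Ta.toReal ^ 2 = (Ta * Ta).toReal := by rw [ENNReal.toReal_mul, pow_two]
    _ ≤ (Txx * Tyy).toReal := ENNReal.toReal_mono (ENNReal.mul_ne_top hTxx_top hTyy_top) hTT
    _ = Txx.toReal * Tyy.toReal := ENNReal.toReal_mul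
end

section
/- Let H ∈ (1/2, 3/4). Then ∫_ℝ |u+a|^{2H−2} |v+a|^{2H−2} da = k_H |u−v|^{4H−3} for all u ≠ v, where k_H = B(2H−1, 3−4H) + B(2H−1, 2H−1) with B the Beta function (equivalently, k_H = ∫_ℝ |s|^{2H−2}|1+s|^{2H−2} ds). -/
open MeasureTheory

/-- Convolution identity: `∫_ℝ |u+a|^{2H−2}|v+a|^{2H−2} da = k_H |u−v|^{4H−3}`,
with `k_H = ∫_ℝ |s|^{2H−2}|1+s|^{2H−2} ds`. -/
theorem stmt_8 (H : ℝ) (hH : H ∈ Set.Ioo (1/2 : ℝ) (3/4 : ℝ))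
    (u v : ℝ) (huv : u ≠ v) :
    ∫ a : ℝ, |u + a| ^ (2*H - 2) * |v + a| ^ (2*H - 2)
      = (∫ s : ℝ, |s| ^ (2*H - 2) * |1 + s| ^ (2*H - 2)) * |u - v| ^ (4*H - 3) := by
  set p : ℝ := 2*H - 2 with hp
  have hc : u - v ≠ 0 := sub_ne_zero.mpr huv
  have hcabs : (0:ℝ) < |u - v| := abs_pos.mpr hc
  set g : ℝ → ℝ := fun a => |u + a| ^ p * |v + a| ^ p with hg
  have key : ∫ s : ℝ, g (-(u - v) * s + -u) = |(-(u - v))⁻¹| • ∫ a : ℝ, g a := by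
    rw [Measure.integral_comp_mul_left (fun y => g (y + -u)) (-(u-v))]
    congr 1
    exact integral_add_right_eq_self g (-u)
  have heq : ∀ s : ℝ, g (-(u - v) * s + -u)
      = |u - v| ^ (2*p) * (|s| ^ p * |1 + s| ^ p) := by
    intro s
    have h1 : u + (-(u - v) * s + -u) = -((u - v) * s) := by ring
    have h2 : v + (-(u - v) * s + -u) = -((u - v) * (1 + s)) := by ring
    simp only [hg, h1, h2, abs_neg, abs_mul,
      Real.mul_rpow (abs_nonneg _) (abs_nonneg _)]
    rw [show (2:ℝ)*p = p + p by ring, Real.rpow_add hcabs]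
    ring
  simp only [heq] at key
  rw [MeasureTheory.integral_const_mul] at key
  have hinv : |(-(u - v))⁻¹| = |u - v|⁻¹ := by
    rw [abs_inv, abs_neg]
  rw [hinv, smul_eq_mul] at key
  have h43 : (4:ℝ)*H - 3 = 2*p + 1 := by rw [hp]; ring
  rw [h43, Real.rpow_add hcabs, Real.rpow_one]
  have h2 : |u - v| * (|u - v| ^ (2*p) * ∫ a : ℝ, |a| ^ p * |1 + a| ^ p)
      = ∫ a : ℝ, g a := by
    rw [key, ← mul_assoc, mul_inv_cancel₀ (ne_of_gt hcabs), one_mul]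
  rw [← h2]
  ring
end

section
/- Let H ∈ (1/2,1), let x : [0,∞) → ℝ satisfy ∫_{[0,∞)²} |x(u)x(v)| max(min(u,v),1) |v−u|^{2H−2} du dv < ∞, and set L(t) = ∫_{−∞}^0 x(t−s) dB^H(s) for t ≥ 0, where B^H is a two-sided fractional Brownian motion. Then for every integer k ≥ 1, ∫₀^∞ E[L(t)^{2k}] dt < ∞. -/
open MeasureTheory ProbabilityTheory Set
open scoped ENNReal

/-- Change of variables `z ↦ (t - z.1, t - z.2)` for lower Lebesgue integrals. -/
lemma aux_cov (G : ℝ × ℝ → ℝ≥0∞) (hG : Measurable G) (t : ℝ) :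
    ∫⁻ z in Set.Iic (0:ℝ) ×ˢ Set.Iic (0:ℝ), G (t - z.1, t - z.2) =
    ∫⁻ p in Set.Ici t ×ˢ Set.Ici t, G p := by
  have h1 : MeasurePreserving (fun s : ℝ => t - s) volume volume :=
    Measure.measurePreserving_sub_left volume t
  have h2 : MeasurePreserving (fun z : ℝ × ℝ => (t - z.1, t - z.2)) volume volume := by
    rw [Measure.volume_eq_prod]
    exact h1.prod h1
  have hpre : (fun z : ℝ × ℝ => (t - z.1, t - z.2)) ⁻¹' (Set.Ici t ×ˢ Set.Ici t)
      = Set.Iic (0:ℝ) ×ˢ Set.Iic (0:ℝ) := by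
    ext z
    simp only [Set.mem_preimage, Set.mem_prod, Set.mem_Ici, Set.mem_Iic]
    constructor <;> intro h <;> exact ⟨by linarith [h.1], by linarith [h.2]⟩
  rw [← hpre]
  exact h2.setLIntegral_comp_preimage (measurableSet_Ici.prod measurableSet_Ici) hG

/-- Tonelli-type bound: integrating the tail double integral in `t` over `[0,∞)`. -/
lemma aux_ton (G : ℝ × ℝ → ℝ≥0∞) (hG : Measurable G) :
    ∫⁻ t in Set.Ici (0:ℝ), ∫⁻ p in Set.Ici t ×ˢ Set.Ici t, G p ≤
    ∫⁻ p in Set.Ici (0:ℝ) ×ˢ Set.Ici (0:ℝ),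
      ENNReal.ofReal (max (min p.1 p.2) 1) * G p := by
  classical
  set S : Set (ℝ × (ℝ × ℝ)) := {q | q.1 ≤ q.2.1 ∧ q.1 ≤ q.2.2} with hS
  have hSmeas : MeasurableSet S := by
    have h1 : MeasurableSet {q : ℝ × (ℝ × ℝ) | q.1 ≤ q.2.1} :=
      measurableSet_le measurable_fst (measurable_fst.comp measurable_snd)
    have h2 : MeasurableSet {q : ℝ × (ℝ × ℝ) | q.1 ≤ q.2.2} :=
      measurableSet_le measurable_fst (measurable_snd.comp measurable_snd)
    exact h1.inter h2
  set f : ℝ → ℝ × ℝ → ℝ≥0∞ := fun t p => G p * S.indicator 1 (t, p) with hf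
  have hfmeas : Measurable (Function.uncurry f) := by
    apply (hG.comp measurable_snd).mul
    exact (measurable_const.indicator hSmeas).comp
      (measurable_fst.prodMk measurable_snd)
  have key : ∀ t ∈ Set.Ici (0:ℝ), (∫⁻ p in Set.Ici t ×ˢ Set.Ici t, G p)
      = ∫⁻ p in Set.Ici (0:ℝ) ×ˢ Set.Ici (0:ℝ), f t p := by
    intro t ht
    have hsub : Set.Ici t ×ˢ Set.Ici t ⊆ Set.Ici (0:ℝ) ×ˢ Set.Ici (0:ℝ) :=
      Set.prod_mono (Set.Ici_subset_Ici.2 ht) (Set.Ici_subset_Ici.2 ht)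
    have hind : ∀ p, f t p = (Set.Ici t ×ˢ Set.Ici t).indicator G p := by
      intro p
      by_cases hp : p ∈ Set.Ici t ×ˢ Set.Ici t
      · have hmem : (t, p) ∈ S := ⟨hp.1, hp.2⟩
        show G p * S.indicator 1 (t, p) = _
        rw [Set.indicator_of_mem hp, Set.indicator_of_mem hmem, Pi.one_apply, mul_one]
      · have hmem : (t, p) ∉ S := fun hc => hp ⟨hc.1, hc.2⟩
        show G p * S.indicator 1 (t, p) = _
        rw [Set.indicator_of_notMem hp, Set.indicator_of_notMem hmem, mul_zero]
    simp_rw [hind]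
    rw [lintegral_indicator (measurableSet_Ici.prod measurableSet_Ici),
      Measure.restrict_restrict (measurableSet_Ici.prod measurableSet_Ici),
      Set.inter_eq_left.2 hsub]
  rw [setLIntegral_congr_fun measurableSet_Ici key]
  rw [lintegral_lintegral_swap hfmeas.aemeasurable]
  refine lintegral_mono fun p => ?_
  have hind2 : ∀ t : ℝ, S.indicator (1 : ℝ × (ℝ × ℝ) → ℝ≥0∞) (t, p)
      = (Set.Iic p.1 ∩ Set.Iic p.2).indicator 1 t := by
    intro t
    by_cases ht : t ∈ Set.Iic p.1 ∩ Set.Iic p.2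
    · rw [Set.indicator_of_mem ht, Set.indicator_of_mem]
      · rfl
      · exact ⟨ht.1, ht.2⟩
    · rw [Set.indicator_of_notMem ht, Set.indicator_of_notMem]
      intro hc
      exact ht ⟨hc.1, hc.2⟩
  calc ∫⁻ t in Set.Ici (0:ℝ), f t p
      = ∫⁻ t in Set.Ici (0:ℝ), G p * (Set.Iic p.1 ∩ Set.Iic p.2).indicator 1 t := by
        simp_rw [hf, hind2]
    _ = G p * ∫⁻ t in Set.Ici (0:ℝ), (Set.Iic p.1 ∩ Set.Iic p.2).indicator 1 t := by
        exact lintegral_const_mul _ (measurable_one.indicator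
          (measurableSet_Iic.inter measurableSet_Iic))
    _ = G p * volume ((Set.Iic p.1 ∩ Set.Iic p.2) ∩ Set.Ici 0) := by
        rw [lintegral_indicator_one (measurableSet_Iic.inter measurableSet_Iic),
          Measure.restrict_apply (measurableSet_Iic.inter measurableSet_Iic)]
    _ ≤ G p * ENNReal.ofReal (max (min p.1 p.2) 1) := by
        gcongr
        have hsub2 : (Set.Iic p.1 ∩ Set.Iic p.2) ∩ Set.Ici 0
            ⊆ Set.Icc 0 (max (min p.1 p.2) 1) := by
          intro t ht
          exact ⟨ht.2, le_max_of_le_left (le_min ht.1.1 ht.1.2)⟩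
        calc volume ((Set.Iic p.1 ∩ Set.Iic p.2) ∩ Set.Ici 0)
            ≤ volume (Set.Icc (0:ℝ) (max (min p.1 p.2) 1)) := measure_mono hsub2
          _ = ENNReal.ofReal (max (min p.1 p.2) 1) := by rw [Real.volume_Icc, sub_zero]
    _ = ENNReal.ofReal (max (min p.1 p.2) 1) * G p := mul_comm _ _

/-- Even moments of a real Gaussian with mean zero, via scaling from the standard Gaussian. -/
lemma aux_gauss_moment (v : NNReal) (k : ℕ) :
    ∫ y, y ^ (2*k) ∂(gaussianReal 0 v)
      = (v:ℝ)^k * ∫ y, y ^ (2*k) ∂(gaussianReal 0 1) := by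
  have hc : gaussianReal 0 v = (gaussianReal 0 1).map (fun y => Real.sqrt v * y) := by
    rw [show (fun y => Real.sqrt v * y) = (Real.sqrt v * ·) from rfl,
      gaussianReal_map_const_mul]
    congr 1
    · simp
    · ext
      push_cast
      rw [mul_one]
      exact (Real.sq_sqrt v.coe_nonneg).symm
  rw [hc, integral_map (by fun_prop) (by fun_prop)]
  simp_rw [mul_pow]
  rw [integral_const_mul]
  congr 1
  rw [pow_mul, Real.sq_sqrt v.coe_nonneg]

/-- Under condition (dol2), all even moments of `L(t)` are integrable in `t` on `[0,∞)`. -/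
theorem stmt_9 {Ω : Type*} [MeasureSpace Ω] [IsProbabilityMeasure (ℙ : Measure Ω)]
    (H : ℝ) (hH : H ∈ Set.Ioo (1/2 : ℝ) 1)
    (x : ℝ → ℝ) (hx : Measurable x) (hx0 : ∀ u < (0:ℝ), x u = 0)
    (hxint : IntegrableOn
      (fun z : ℝ × ℝ =>
        |x z.1 * x z.2| * max (min z.1 z.2) 1 * |z.2 - z.1| ^ (2*H - 2))
      (Set.Ici (0:ℝ) ×ˢ Set.Ici (0:ℝ)))
    (L : ℝ → Ω → ℝ)
    -- `L(t) = ∫_{-∞}^0 x(t-s) dB^H(s)` is centered Gaussian with the Wiener-isometry variance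
    (hL : ∀ t : ℝ, 0 ≤ t →
      Measure.map (L t) ℙ = gaussianReal 0
        (Real.toNNReal (H * (2*H - 1) *
          ∫ z in Set.Iic (0:ℝ) ×ˢ Set.Iic (0:ℝ),
            x (t - z.1) * x (t - z.2) * |z.2 - z.1| ^ (2*H - 2)))) :
    ∀ k : ℕ, 1 ≤ k →
      ∫⁻ t in Set.Ici (0:ℝ), ENNReal.ofReal (∫ ω, (L t ω) ^ (2*k) ∂ℙ) < ⊤ := by
  intro k hk
  obtain ⟨hH1, hH2⟩ := hH
  have hc₀ : (0:ℝ) ≤ H * (2*H - 1) := by nlinarith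
  set c₀ : ℝ := H * (2*H - 1) with hc₀def
  set G : ℝ × ℝ → ℝ≥0∞ :=
    fun p => ENNReal.ofReal (|x p.1| * |x p.2| * |p.2 - p.1| ^ (2*H - 2)) with hGdef
  have hGmeas : Measurable G := by fun_prop
  set W : ℝ → ℝ≥0∞ := fun t => ∫⁻ p in Set.Ici t ×ˢ Set.Ici t, G p with hWdef
  have hfin : ∫⁻ p in Set.Ici (0:ℝ) ×ˢ Set.Ici (0:ℝ),
      ENNReal.ofReal (max (min p.1 p.2) 1) * G p < ⊤ := by
    have hb : ∀ p : ℝ × ℝ, ENNReal.ofReal (max (min p.1 p.2) 1) * G p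
        ≤ (‖|x p.1 * x p.2| * max (min p.1 p.2) 1 * |p.2 - p.1| ^ (2*H - 2)‖₊ : ℝ≥0∞) := by
      intro p
      have h1 : (0:ℝ) ≤ max (min p.1 p.2) 1 := le_trans zero_le_one (le_max_right _ _)
      simp only [hGdef]
      rw [← ENNReal.ofReal_mul h1]
      refine le_trans (ENNReal.ofReal_le_ofReal (le_of_eq ?_)) (Real.ofReal_le_enorm _)
      rw [abs_mul]
      ring
    exact lt_of_le_of_lt (lintegral_mono hb) hxint.2
  have hW0 : W 0 < ⊤ := by
    refine lt_of_le_of_lt (lintegral_mono fun p => ?_) hfin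
    conv_lhs => rw [← one_mul (G p)]
    gcongr
    rw [← ENNReal.ofReal_one]
    exact ENNReal.ofReal_le_ofReal (le_max_right _ _)
  have hWton : ∫⁻ t in Set.Ici (0:ℝ), W t < ⊤ :=
    lt_of_le_of_lt (aux_ton G hGmeas) hfin
  have hWmono : ∀ t ∈ Set.Ici (0:ℝ), W t ≤ W 0 := fun t ht =>
    lintegral_mono_set (Set.prod_mono (Set.Ici_subset_Ici.2 ht) (Set.Ici_subset_Ici.2 ht))
  -- the variance bound
  have hvar : ∀ t : ℝ, ENNReal.ofReal ((Real.toNNReal (c₀ *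
      ∫ z in Set.Iic (0:ℝ) ×ˢ Set.Iic (0:ℝ),
        x (t - z.1) * x (t - z.2) * |z.2 - z.1| ^ (2*H - 2)) : ℝ))
      ≤ ENNReal.ofReal c₀ * W t := by
    intro t
    rw [ENNReal.ofReal_coe_nnreal]
    show ENNReal.ofReal (c₀ * _) ≤ _
    rw [ENNReal.ofReal_mul hc₀]
    gcongr
    refine le_trans (Real.ofReal_le_enorm _) ?_
    refine le_trans (enorm_integral_le_lintegral_enorm _) ?_
    show _ ≤ ∫⁻ p in Set.Ici t ×ˢ Set.Ici t, G p
    rw [← aux_cov G hGmeas t]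
    refine le_of_eq (setLIntegral_congr_fun (measurableSet_Iic.prod measurableSet_Iic)
      (fun z hz => ?_))
    rw [Real.enorm_eq_ofReal_abs]
    simp only [hGdef]
    congr 1
    rw [abs_mul, abs_mul, abs_of_nonneg (Real.rpow_nonneg (abs_nonneg _) _)]
    congr 2
    rw [show (t - z.2) - (t - z.1) = -(z.2 - z.1) by ring, abs_neg]
  -- the moment computation
  set M : ℝ := ∫ y, y ^ (2*k) ∂(gaussianReal 0 1) with hMdef
  have hM0 : 0 ≤ M := integral_nonneg fun y => Even.pow_nonneg ⟨k, by ring⟩ _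
  have hmom : ∀ t ∈ Set.Ici (0:ℝ), ENNReal.ofReal (∫ ω, (L t ω) ^ (2*k) ∂ℙ)
      ≤ (ENNReal.ofReal c₀ * W t) ^ k * ENNReal.ofReal M := by
    intro t ht
    have hmap := hL t ht
    have hae : AEMeasurable (L t) ℙ := by
      by_contra h
      rw [Measure.map_of_not_aemeasurable h] at hmap
      exact IsProbabilityMeasure.ne_zero (gaussianReal 0 _) hmap.symm
    have hE : ∫ ω, (L t ω) ^ (2*k) ∂ℙ
        = ((Real.toNNReal (c₀ * ∫ z in Set.Iic (0:ℝ) ×ˢ Set.Iic (0:ℝ),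
            x (t - z.1) * x (t - z.2) * |z.2 - z.1| ^ (2*H - 2)) : ℝ))^k * M := by
      have hint := integral_map (φ := L t) (f := fun y => y ^ (2*k)) hae (by fun_prop)
      rw [← hint, hmap, aux_gauss_moment]
    rw [hE, ENNReal.ofReal_mul (pow_nonneg (NNReal.coe_nonneg _) k),
      ENNReal.ofReal_pow (NNReal.coe_nonneg _)]
    gcongr
    exact hvar t
  -- assembly
  set C : ℝ≥0∞ := (ENNReal.ofReal c₀)^k * (W 0)^(k-1) * ENNReal.ofReal M with hCdef
  have hCne : C ≠ ⊤ := by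
    rw [hCdef]
    exact ENNReal.mul_ne_top (ENNReal.mul_ne_top (ENNReal.pow_ne_top ENNReal.ofReal_ne_top)
      (ENNReal.pow_ne_top hW0.ne)) ENNReal.ofReal_ne_top
  have hkey : ∀ t ∈ Set.Ici (0:ℝ),
      ENNReal.ofReal (∫ ω, (L t ω) ^ (2*k) ∂ℙ) ≤ C * W t := by
    intro t ht
    refine le_trans (hmom t ht) ?_
    rw [mul_pow]
    have hpow : (W t)^k ≤ (W 0)^(k-1) * W t := by
      have h1 : (W t)^k = (W t)^(k-1) * W t := by
        conv_lhs => rw [← Nat.sub_add_cancel hk]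
        rw [pow_succ]
      rw [h1]
      gcongr
      exact hWmono t ht
    calc (ENNReal.ofReal c₀)^k * (W t)^k * ENNReal.ofReal M
        ≤ (ENNReal.ofReal c₀)^k * ((W 0)^(k-1) * W t) * ENNReal.ofReal M := by gcongr
      _ = C * W t := by rw [hCdef]; ring
  calc ∫⁻ t in Set.Ici (0:ℝ), ENNReal.ofReal (∫ ω, (L t ω) ^ (2*k) ∂ℙ)
      ≤ ∫⁻ t in Set.Ici (0:ℝ), C * W t :=
        lintegral_mono_ae ((ae_restrict_iff' measurableSet_Ici).2 (ae_of_all _ hkey))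
    _ = C * ∫⁻ t in Set.Ici (0:ℝ), W t := lintegral_const_mul' _ _ hCne
    _ < ⊤ := ENNReal.mul_lt_top hCne.lt_top hWton
end
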